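/- Let G be a graph with independence number at most 2, |V(G)| = 3k, and ω(G) ≤ k. Then the complement of G contains a matching of size k. -/

import Mathlib

open Finset

/-- Build a matching subgraph from a finset of pairwise disjoint edges. -/
lemma matching_of_disjoint_edges {V : Type*} [Fintype V] [DecidableEq V]
    (H : SimpleGraph V) (S : Finset (Sym2 V))
    (hS : ∀ e ∈ S, e ∈ H.edgeSet)
    (hd : ∀ e ∈ S, ∀ f ∈ S, e ≠ f → ∀ v, v ∈ e → v ∉ f) :
    ∃ M : SimpleGraph.Subgraph H, M.IsMatching ∧ M.edgeSet = (S : Set (Sym2 V)) := by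
  have hadj : ∀ u v : V, s(u, v) ∈ S → H.Adj u v := by
    intro u v h
    exact hS _ h
  refine ⟨⟨{v | ∃ e ∈ S, v ∈ e}, fun u v => s(u, v) ∈ S, ?_, ?_, ?_⟩, ?_, ?_⟩
  · intro u v h; exact hadj u v h
  · intro u v h; exact ⟨s(u, v), h, Sym2.mem_mk_left u v⟩
  · constructor; intro u v h; rwa [Sym2.eq_swap] at h
  · rintro v ⟨e, heS, hve⟩
    refine ⟨Sym2.Mem.other hve, ?_, ?_⟩
    · show s(v, _) ∈ S
      rwa [Sym2.other_spec hve]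
    · intro w hw
      have hw' : s(v, w) ∈ S := hw
      have h1 : s(v, Sym2.Mem.other hve) ∈ S := by rwa [Sym2.other_spec hve]
      by_contra hne
      have : s(v, w) ≠ s(v, Sym2.Mem.other hve) := by
        intro h; exact hne (Sym2.congr_right.mp h)
      exact hd _ hw' _ h1 this v (Sym2.mem_mk_left v w) (Sym2.mem_mk_left _ _)
  · ext e
    induction e using Sym2.ind with
    | _ u v => simp [SimpleGraph.Subgraph.mem_edgeSet]

/-- If `G` has independence number at most 2, `|V(G)| = 3k` and `ω(G) ≤ k`, then the
complement of `G` contains a matching of size `k` (i.e. `k` pairwise disjoint edges). -/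
theorem stmt_6 {V : Type*} [Fintype V] [DecidableEq V]
    (G : SimpleGraph V) (k : ℕ)
    (hα : ∀ s : Finset V, (∀ u ∈ s, ∀ w ∈ s, u ≠ w → ¬ G.Adj u w) → s.card ≤ 2)
    (hn : Fintype.card V = 3 * k)
    (hω : ∀ s : Finset V, G.IsClique (s : Set V) → s.card ≤ k) :
    ∃ M : SimpleGraph.Subgraph Gᶜ, M.IsMatching ∧ M.edgeSet.ncard = k := by
  classical
  -- valid families: pairwise disjoint sets of edges of Gᶜ
  set P : Finset (Finset (Sym2 V)) :=
    (Gᶜ.edgeFinset.powerset).filter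
      (fun S => ∀ e ∈ S, ∀ f ∈ S, e ≠ f → ∀ v, v ∈ e → v ∉ f) with hP
  have hPne : P.Nonempty := ⟨∅, by simp [hP]⟩
  obtain ⟨S, hSP, hSmax⟩ := P.exists_max_image Finset.card hPne
  rw [hP, Finset.mem_filter, Finset.mem_powerset] at hSP
  obtain ⟨hSsub, hSd⟩ := hSP
  -- uncovered vertices
  set T : Finset V := Finset.univ.filter (fun v => ∀ e ∈ S, v ∉ e) with hT
  -- T is a clique in G
  have hTclique : G.IsClique (T : Set V) := by
    intro u hu w hw huw
    by_contra hGuw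
    have hadj : Gᶜ.Adj u w := ⟨huw, hGuw⟩
    simp only [hT, Finset.coe_filter, Set.mem_setOf_eq, Finset.mem_coe] at hu hw
    -- S ∪ {s(u,w)} is valid, contradicting maximality
    have hnotin : s(u, w) ∉ S := fun h => hu.2 _ h (Sym2.mem_mk_left u w)
    have hvalid : insert s(u, w) S ∈ P := by
      rw [hP, Finset.mem_filter, Finset.mem_powerset]
      constructor
      · intro e he
        rcases Finset.mem_insert.mp he with rfl | he
        · rwa [SimpleGraph.mem_edgeFinset, SimpleGraph.mem_edgeSet]
        · exact hSsub he
      · intro e he f hf hef v hve hvf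
        rcases Finset.mem_insert.mp he with rfl | he'
        · rcases Finset.mem_insert.mp hf with rfl | hf'
          · exact hef rfl
          · rcases Sym2.mem_iff.mp hve with rfl | rfl
            · exact hu.2 _ hf' hvf
            · exact hw.2 _ hf' hvf
        · rcases Finset.mem_insert.mp hf with rfl | hf'
          · rcases Sym2.mem_iff.mp hvf with rfl | rfl
            · exact hu.2 _ he' hve
            · exact hw.2 _ he' hve
          · exact hSd e he' f hf' hef v hve hvf
    have := hSmax _ hvalid
    rw [Finset.card_insert_of_notMem hnotin] at this
    omega
  have hTk : T.card ≤ k := hω T hTclique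
  -- covered vertices
  set C : Finset V := S.biUnion (fun e => Finset.univ.filter (· ∈ e)) with hC
  have hCcard : C.card = 2 * S.card := by
    rw [hC, Finset.card_biUnion]
    · rw [Finset.sum_congr rfl (fun e he => ?_), Finset.sum_const, smul_eq_mul, mul_comm]
      -- each edge covers exactly 2 vertices
      have hnd : ¬ e.IsDiag := by
        have := hSsub he
        rw [SimpleGraph.mem_edgeFinset] at this
        exact Gᶜ.not_isDiag_of_mem_edgeSet this
      induction e using Sym2.ind with
      | _ a b =>
        have hab : a ≠ b := by simpa using hnd
        have : Finset.univ.filter (· ∈ s(a, b)) = {a, b} := by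
          ext x; simp [Sym2.mem_iff]
        rw [this, Finset.card_insert_of_notMem (by simpa using hab), Finset.card_singleton]
    · intro e he f hf hef
      simp only [Finset.disjoint_left, Finset.mem_filter]
      rintro v ⟨-, hve⟩ ⟨-, hvf⟩
      exact hSd e he f hf hef v hve hvf
  have hunion : Finset.univ = T ∪ C := by
    ext v
    simp only [Finset.mem_univ, true_iff, Finset.mem_union, hT, hC, Finset.mem_filter,
      Finset.mem_biUnion, Finset.mem_univ, true_and]
    by_cases h : ∀ e ∈ S, v ∉ e
    · exact Or.inl h
    · push_neg at h; exact Or.inr (by obtain ⟨e, he, hve⟩ := h; exact ⟨e, he, hve⟩)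
  have hdisj : Disjoint T C := by
    simp only [Finset.disjoint_left, hT, hC, Finset.mem_filter, Finset.mem_biUnion,
      Finset.mem_univ, true_and]
    rintro v hv ⟨e, he, hve⟩
    exact hv e he hve
  have hcount : 3 * k = T.card + 2 * S.card := by
    rw [← hn, ← Finset.card_univ, hunion, Finset.card_union_of_disjoint hdisj, hCcard]
  have hSk : k ≤ S.card := by omega
  -- take a subset of size k
  obtain ⟨S', hS'sub, hS'card⟩ := Finset.exists_subset_card_eq hSk
  obtain ⟨M, hM, hMe⟩ := matching_of_disjoint_edges Gᶜ S'
    (fun e he => (SimpleGraph.mem_edgeFinset).mp (hSsub (hS'sub he)))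
    (fun e he f hf => hSd e (hS'sub he) f (hS'sub hf))
  exact ⟨M, hM, by rw [hMe, Set.ncard_coe_finset, hS'card]⟩
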